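/- arXiv:1706.03241 — 2 statements merged into one kernel-verified Lean document; each statement's English description precedes it below -/
import Mathlib

section
/- Let X be a real random variable with the Gaussian distribution of mean 0 and variance v ≥ 0 (gaussianReal 0 v), let a, b ∈ ℝ, and let ε ∈ (0,1). Then the lower-bound chance constraint P(a + X ≥ b) ≥ 1 − ε holds if and only if a − √v · Φ^{-1}(1−ε) ≥ b, where Φ^{-1} is the quantile function (inverse cumulative distribution function) of the standard normal distribution. -/
open MeasureTheory ProbabilityTheory

private lemma gauss_Ici (s : ℝ) :
    gaussianReal 0 1 (Set.Ici s) = ENNReal.ofReal (1 - cdf (gaussianReal 0 1) s) := by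
  have hs : gaussianReal 0 1 {s} = 0 := by
    refine gaussianReal_absolutelyContinuous 0 one_ne_zero ?_
    simp
  have hIio : gaussianReal 0 1 (Set.Iio s) = gaussianReal 0 1 (Set.Iic s) := by
    rw [← Set.Iio_union_right, measure_union (by simp) (measurableSet_singleton s), hs, add_zero]
  have h1 : Set.Ici s = (Set.Iio s)ᶜ := by simp
  rw [h1, measure_compl measurableSet_Iio (measure_ne_top _ _), hIio,
    ← ofReal_cdf (gaussianReal 0 1) s, measure_univ,
    ← ENNReal.ofReal_one, ← ENNReal.ofReal_sub _ (cdf_nonneg _ _)]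

private lemma gauss_cdf_strictMono : StrictMono (cdf (gaussianReal 0 1)) := by
  intro x y hxy
  have hpos : gaussianReal 0 1 (Set.Ioc x y) ≠ 0 := by
    intro h
    have := gaussianReal_absolutelyContinuous' 0 one_ne_zero h
    rw [Real.volume_Ioc] at this
    exact (ENNReal.ofReal_pos.mpr (by linarith)).ne' this
  have hdisj : Disjoint (Set.Iic x) (Set.Ioc x y) := by
    simp [Set.disjoint_left]
    intro a ha h; linarith
  have hunion : Set.Iic x ∪ Set.Ioc x y = Set.Iic y := Set.Iic_union_Ioc_eq_Iic hxy.le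
  have hlt : gaussianReal 0 1 (Set.Iic x) < gaussianReal 0 1 (Set.Iic y) := by
    rw [← hunion, measure_union hdisj measurableSet_Ioc]
    exact ENNReal.lt_add_right (measure_ne_top _ _) hpos
  rw [← ofReal_cdf (gaussianReal 0 1) x, ← ofReal_cdf (gaussianReal 0 1) y] at hlt
  by_contra h
  exact absurd (ENNReal.ofReal_le_ofReal (not_lt.mp h)) (not_le.mpr hlt)

private lemma gauss_map_neg : (gaussianReal 0 1).map (fun x : ℝ => -x) = gaussianReal 0 1 := by
  have := gaussianReal_map_const_mul (μ := 0) (v := 1) (-1)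
  have h1 : NNReal.mk ((-1:ℝ)^2) (sq_nonneg _) * 1 = 1 := by ext; norm_num
  simp only [mul_zero, h1] at this
  rw [← this]
  congr 1
  ext x
  ring

private lemma gauss_cdf_symm (t : ℝ) :
    cdf (gaussianReal 0 1) (-t) = 1 - cdf (gaussianReal 0 1) t := by
  have h1 : gaussianReal 0 1 (Set.Iic (-t)) = gaussianReal 0 1 (Set.Ici t) := by
    conv_lhs => rw [← gauss_map_neg]
    rw [Measure.map_apply measurable_neg measurableSet_Iic]
    congr 1
    ext x
    simp
  have h2 := ofReal_cdf (gaussianReal 0 1) (-t)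
  rw [h1, gauss_Ici] at h2
  have := ENNReal.ofReal_eq_ofReal_iff (cdf_nonneg _ _)
    (by linarith [cdf_le_one (gaussianReal 0 1) t]) |>.mp h2
  linarith

/-- Let `Y` be a real random variable with law `gaussianReal 0 v`
(mean `0`, variance `v ≥ 0`), `a, b ∈ ℝ`, `ε ∈ (0,1)`, and let `q = Φ⁻¹(1-ε)` be the
point where the standard normal cdf equals `1 - ε`. Then the lower-bound chance
constraint `P(a + Y ≥ b) ≥ 1 - ε` holds if and only if `a - √v · Φ⁻¹(1-ε) ≥ b`. -/
theorem stmt_3 {X : Type} [MeasurableSpace X] (μ : Measure X) [IsProbabilityMeasure μ]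
    (v : NNReal) (Y : X → ℝ) (hYmeas : Measurable Y)
    (hY : Measure.map Y μ = gaussianReal 0 v)
    (a b ε : ℝ) (hε : ε ∈ Set.Ioo (0 : ℝ) 1)
    (q : ℝ) (hq : cdf (gaussianReal 0 1) q = 1 - ε) :
    ENNReal.ofReal (1 - ε) ≤ μ {x | a + Y x ≥ b} ↔ a - Real.sqrt v * q ≥ b := by
  obtain ⟨hε0, hε1⟩ := hε
  have hset : {x | a + Y x ≥ b} = Y ⁻¹' (Set.Ici (b - a)) := by
    ext x
    simp only [Set.mem_setOf_eq, Set.mem_preimage, Set.mem_Ici, ge_iff_le]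
    constructor <;> intro <;> linarith
  have hμ : μ {x | a + Y x ≥ b} = gaussianReal 0 v (Set.Ici (b - a)) := by
    rw [hset, ← hY, Measure.map_apply hYmeas measurableSet_Ici]
  rw [hμ]
  by_cases hv : v = 0
  · subst hv
    rw [gaussianReal_zero_var]
    rw [Measure.dirac_apply' 0 measurableSet_Ici]
    simp only [NNReal.coe_zero, Real.sqrt_zero, zero_mul, sub_zero, ge_iff_le]
    by_cases hab : b ≤ a
    · have h0 : (0:ℝ) ∈ Set.Ici (b - a) := by simp; linarith
      simp only [Set.indicator_of_mem h0]
      simp only [hab, iff_true, Pi.one_apply]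
      calc ENNReal.ofReal (1 - ε) ≤ ENNReal.ofReal 1 := ENNReal.ofReal_le_ofReal (by linarith)
        _ = 1 := ENNReal.ofReal_one
    · have h0 : (0:ℝ) ∉ Set.Ici (b - a) := by simp; linarith
      simp only [Set.indicator_of_notMem h0]
      simp only [hab, iff_false, not_le]
      exact ENNReal.ofReal_pos.mpr (by linarith)
  · have hvpos : (0:ℝ) < (v:ℝ) := by
      exact_mod_cast pos_iff_ne_zero.mpr hv
    have hcpos : 0 < Real.sqrt v := Real.sqrt_pos.mpr hvpos
    have hveq : NNReal.mk ((Real.sqrt v)^2) (sq_nonneg _) * 1 = v := by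
      ext
      simp [Real.sq_sqrt (v.coe_nonneg)]
    have hmap : gaussianReal 0 v = (gaussianReal 0 1).map (fun x => Real.sqrt v * x) := by
      have h := gaussianReal_map_const_mul (μ := 0) (v := 1) (Real.sqrt v)
      rw [mul_zero, hveq] at h
      exact h.symm
    have hpre : (fun x : ℝ => Real.sqrt v * x) ⁻¹' Set.Ici (b - a)
        = Set.Ici ((b - a) / Real.sqrt v) := by
      ext x
      simp only [Set.mem_preimage, Set.mem_Ici, div_le_iff₀ hcpos, mul_comm]
    rw [hmap, Measure.map_apply (measurable_const_mul _) measurableSet_Ici, hpre, gauss_Ici]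
    set s := (b - a) / Real.sqrt v with hs
    have hΦnq : cdf (gaussianReal 0 1) (-q) = ε := by rw [gauss_cdf_symm, hq]; ring
    rw [ENNReal.ofReal_le_ofReal_iff (by linarith [cdf_le_one (gaussianReal 0 1) s])]
    constructor
    · intro h
      have h2 : cdf (gaussianReal 0 1) s ≤ cdf (gaussianReal 0 1) (-q) := by
        rw [hΦnq]; linarith
      have h3 : s ≤ -q := gauss_cdf_strictMono.le_iff_le.mp h2
      rw [hs, div_le_iff₀ hcpos] at h3
      have := mul_comm q (Real.sqrt v)
      nlinarith
    · intro h
      have h3 : s ≤ -q := by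
        rw [hs, div_le_iff₀ hcpos]
        nlinarith [mul_comm q (Real.sqrt v)]
      have h2 : cdf (gaussianReal 0 1) s ≤ cdf (gaussianReal 0 1) (-q) :=
        gauss_cdf_strictMono.monotone h3
      rw [hΦnq] at h2
      linarith
end

section
/- Let ω be a real random variable with E[ω] = 0 and finite variance σ² (ω square-integrable), let a, b ∈ ℝ, and let ε ∈ (0,1). If a + σ·√((1−ε)/ε) ≤ b, then P(a + ω ≤ b) ≥ 1 − ε. In other words, replacing the Gaussian margin Φ^{-1}(1−ε)·σ by the distributionally robust margin √((1−ε)/ε)·σ enforces the chance constraint for every distribution of ω with zero mean and variance σ². -/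
open MeasureTheory

/-- Auxiliary numeric lemma (core of Cantelli's inequality optimization). -/
lemma cantelli_num (σ t ε p : ℝ) (hσ : 0 < σ) (ht : 0 < t) (hε : 0 < ε) (hp : 0 ≤ p)
    (hεt : σ ^ 2 * (1 - ε) ≤ ε * t ^ 2)
    (hm : (t + σ ^ 2 / t) ^ 2 * p ≤ σ ^ 2 + (σ ^ 2 / t) ^ 2) : p ≤ ε := by
  set u : ℝ := σ ^ 2 / t with hu
  have hupos : 0 < u := by positivity
  have hut : u * t = σ ^ 2 := div_mul_cancel₀ _ ht.ne'
  have h1 : σ ^ 2 ≤ ε * (t ^ 2 + σ ^ 2) := by nlinarith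
  have h2 : (t + u) ^ 2 * t ^ 2 = (t ^ 2 + σ ^ 2) ^ 2 := by
    have : (t + u) * t = t ^ 2 + σ ^ 2 := by rw [add_mul]; rw [mul_comm u t] at hut ⊢; nlinarith
    calc (t + u) ^ 2 * t ^ 2 = ((t + u) * t) ^ 2 := by ring
      _ = (t ^ 2 + σ ^ 2) ^ 2 := by rw [this]
  have h3 : (σ ^ 2 + u ^ 2) * t ^ 2 = σ ^ 2 * (t ^ 2 + σ ^ 2) := by nlinarith [hut]
  have h4 : (σ ^ 2 + u ^ 2) * t ^ 2 ≤ ε * ((t + u) ^ 2 * t ^ 2) := by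
    rw [h2, h3]
    have hpos : 0 < t ^ 2 + σ ^ 2 := by positivity
    calc σ ^ 2 * (t ^ 2 + σ ^ 2) ≤ (ε * (t ^ 2 + σ ^ 2)) * (t ^ 2 + σ ^ 2) := by
          exact mul_le_mul_of_nonneg_right h1 hpos.le
      _ = ε * (t ^ 2 + σ ^ 2) ^ 2 := by ring
  have h5 : σ ^ 2 + u ^ 2 ≤ ε * (t + u) ^ 2 := by
    have ht2 : 0 < t ^ 2 := by positivity
    nlinarith
  have htu2 : 0 < (t + u) ^ 2 := by positivity
  nlinarith

/-- Let `ω` be a square-integrable real random variable with mean `0`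
and variance `σ²` (so `σ ≥ 0` and `σ² = E[ω²]`), let `a, b ∈ ℝ` and `ε ∈ (0,1)`.
If the distributionally robust tightened constraint `a + σ·√((1-ε)/ε) ≤ b` holds,
then the chance constraint `P(a + ω ≤ b) ≥ 1 - ε` holds. -/
theorem stmt_6 {X : Type} [MeasurableSpace X] (μ : Measure X) [IsProbabilityMeasure μ]
    (ω : X → ℝ) (hωmeas : Measurable ω) (hL2 : MemLp ω 2 μ)
    (hmean : ∫ x, ω x ∂μ = 0)
    (σ : ℝ) (hσ : 0 ≤ σ) (hvar : σ ^ 2 = ∫ x, (ω x) ^ 2 ∂μ)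
    (a b ε : ℝ) (hε : ε ∈ Set.Ioo (0 : ℝ) 1)
    (h : a + σ * Real.sqrt ((1 - ε) / ε) ≤ b) :
    ENNReal.ofReal (1 - ε) ≤ μ {x | a + ω x ≤ b} := by
  obtain ⟨hε0, hε1⟩ := hε
  have hAmeas : MeasurableSet {x | a + ω x ≤ b} :=
    measurableSet_le (by measurability) measurable_const
  have hAne : μ {x | a + ω x ≤ b} ≠ ⊤ := (measure_lt_top μ _).ne
  rw [ENNReal.ofReal_le_iff_le_toReal hAne]
  have hcompl : (μ {x | a + ω x ≤ b}).toReal = 1 - (μ {x | a + ω x ≤ b}ᶜ).toReal := by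
    have h1 : μ {x | a + ω x ≤ b}ᶜ = 1 - μ {x | a + ω x ≤ b} := by
      rw [measure_compl hAmeas hAne, measure_univ]
    rw [h1, ENNReal.toReal_sub_of_le prob_le_one ENNReal.one_ne_top]
    simp
  rw [hcompl]
  have key : (μ {x | a + ω x ≤ b}ᶜ).toReal ≤ ε := by
    have hωint : Integrable ω μ := hL2.integrable one_le_two
    have hω2int : Integrable (fun x => ω x ^ 2) μ := hL2.integrable_sq
    rcases eq_or_lt_of_le hσ with hσ0 | hσpos
    · -- σ = 0 : ω = 0 a.e.
      have hzero : ∀ᵐ x ∂μ, ω x ^ 2 = 0 := by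
        have : ∫ x, ω x ^ 2 ∂μ = 0 := by rw [← hvar, ← hσ0]; ring
        exact (integral_eq_zero_iff_of_nonneg (fun x => sq_nonneg _) hω2int).mp this
      have hab : a ≤ b := by
        have := h; rw [← hσ0] at this; linarith
      have hae : ∀ᵐ x ∂μ, a + ω x ≤ b := by
        filter_upwards [hzero] with x hx
        have hx0 : ω x = 0 := by nlinarith [sq_nonneg (ω x)]
        rw [hx0]; linarith
      have hsub : μ {x | a + ω x ≤ b}ᶜ = 0 := by
        rw [Set.compl_setOf]
        exact ae_iff.mp hae
      simp [hsub]; linarith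
    · -- σ > 0
      have hs0 : 0 < (1 - ε) / ε := div_pos (by linarith) hε0
      have htge : σ * Real.sqrt ((1 - ε) / ε) ≤ b - a := by linarith
      have htpos : 0 < b - a :=
        lt_of_lt_of_le (mul_pos hσpos (Real.sqrt_pos.mpr hs0)) htge
      have ht2 : σ ^ 2 * ((1 - ε) / ε) ≤ (b - a) ^ 2 := by
        have := mul_self_le_mul_self (mul_nonneg hσ (Real.sqrt_nonneg _)) htge
        nlinarith [Real.sq_sqrt hs0.le, Real.sqrt_nonneg ((1 - ε) / ε)]
      have hεt : σ ^ 2 * (1 - ε) ≤ ε * (b - a) ^ 2 := by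
        calc σ ^ 2 * (1 - ε) = σ ^ 2 * ((1 - ε) / ε) * ε := by field_simp
          _ ≤ (b - a) ^ 2 * ε := mul_le_mul_of_nonneg_right ht2 hε0.le
          _ = ε * (b - a) ^ 2 := by ring
      set u : ℝ := σ ^ 2 / (b - a) with hu
      have hupos : 0 < u := by positivity
      have hfint : Integrable (fun x => (ω x + u) ^ 2) μ := by
        have : MemLp (fun x => ω x + u) 2 μ := hL2.add (memLp_const u)
        exact this.integrable_sq
      have hfval : ∫ x, (ω x + u) ^ 2 ∂μ = σ ^ 2 + u ^ 2 := by
        have hexp : ∀ x, (ω x + u) ^ 2 = ω x ^ 2 + (2 * u * ω x + u ^ 2) := by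
          intro x; ring
        simp_rw [hexp]
        have hg : Integrable (fun x => 2 * u * ω x + u ^ 2) μ :=
          (hωint.const_mul (2 * u)).add (integrable_const _)
        have hg1 : Integrable (fun x => 2 * u * ω x) μ := hωint.const_mul (2 * u)
        rw [integral_add hω2int hg, integral_add hg1 (integrable_const _),
          MeasureTheory.integral_const_mul, hmean, integral_const]
        simp [← hvar]
      have hmarkov := mul_meas_ge_le_integral_of_nonneg
        (μ := μ) (f := fun x => (ω x + u) ^ 2)
        (Filter.Eventually.of_forall fun x => sq_nonneg _) hfint ((b - a + u) ^ 2)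
      rw [hfval] at hmarkov
      have hsub : {x | a + ω x ≤ b}ᶜ ⊆ {x | (b - a + u) ^ 2 ≤ (ω x + u) ^ 2} := by
        intro x hx
        have hxt : b - a < ω x := by
          simp only [Set.mem_compl_iff, Set.mem_setOf_eq, not_le] at hx
          linarith
        have hle : b - a + u ≤ ω x + u := by linarith
        exact pow_le_pow_left₀ (by linarith) hle 2
      have hmono : (μ {x | a + ω x ≤ b}ᶜ).toReal
          ≤ (μ {x | (b - a + u) ^ 2 ≤ (ω x + u) ^ 2}).toReal :=
        ENNReal.toReal_mono (measure_lt_top μ _).ne (measure_mono hsub)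
      have hp0 : 0 ≤ (μ {x | (b - a + u) ^ 2 ≤ (ω x + u) ^ 2}).toReal :=
        ENNReal.toReal_nonneg
      have := cantelli_num σ (b - a) ε
        ((μ {x | (b - a + u) ^ 2 ≤ (ω x + u) ^ 2}).toReal)
        hσpos htpos hε0 hp0 hεt (by rw [← hu]; exact hmarkov)
      linarith
  linarith
end
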